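/- arXiv:2204.07807 — 2 statements merged into one kernel-verified Lean document; each statement's English description precedes it below -/
import Mathlib

section
/- Let k be a field, M a finite-dimensional k-vector space with an endomorphism F, and suppose M = M₁ ⊕ ⋯ ⊕ M_s is a decomposition into F-stable subspaces such that the characteristic polynomials of F on the M_i are pairwise coprime. Let A be a complete Noetherian local ring with residue field k, and let (M̃, F̃) be a lift of (M, F) to a finite free A-module with an endomorphism reducing to F. Then there is a unique decomposition M̃ = M̃₁ ⊕ ⋯ ⊕ M̃_s into F̃-stable finite free A-submodules lifting the given decomposition, namely the generalized eigenspace decomposition determined by the Hensel-lifted factorization of the characteristic polynomial. -/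
open IsLocalRing Polynomial

section PrecompleteAux

variable {R : Type*} [CommRing R] {I : Ideal R}
variable {M : Type*} [AddCommGroup M] [Module R M]
variable {M' : Type*} [AddCommGroup M'] [Module R M']

lemma aux_map_mem_smul_top (f : M →ₗ[R] M') {J : Ideal R} {x : M}
    (hx : x ∈ (J • ⊤ : Submodule R M)) : f x ∈ (J • ⊤ : Submodule R M') := by
  have h1 : f x ∈ (J • (⊤ : Submodule R M)).map f := Submodule.mem_map_of_mem hx
  rw [Submodule.map_smul''] at h1
  exact Submodule.smul_mono le_rfl le_top h1

lemma aux_isPrecomplete_pi {ι : Type*} [Fintype ι] [DecidableEq ι] [IsPrecomplete I R] :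
    IsPrecomplete I (ι → R) := by
  constructor
  intro f hf
  have hcomp : ∀ i : ι, ∃ L : R, ∀ n, f n i ≡ L [SMOD (I ^ n • ⊤ : Submodule R R)] := by
    intro i
    apply IsPrecomplete.prec'
    intro m n hmn
    rw [SModEq.sub_mem]
    have := SModEq.sub_mem.mp (hf hmn)
    simpa using aux_map_mem_smul_top (LinearMap.proj (R := R) (φ := fun _ : ι => R) i) this
  choose L hL using hcomp
  refine ⟨L, fun n => ?_⟩
  rw [SModEq.sub_mem]
  rw [show f n - L = ∑ i : ι, Pi.single i ((f n - L) i) from (Finset.univ_sum_single _).symm]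
  apply Submodule.sum_mem
  intro i _
  have hi : (f n - L) i ∈ (I ^ n • ⊤ : Submodule R R) := by
    have := SModEq.sub_mem.mp (hL i n)
    simpa using this
  simpa using aux_map_mem_smul_top (LinearMap.single R (fun _ : ι => R) i) hi

lemma aux_isPrecomplete_of_equiv (e : M ≃ₗ[R] M') (h : IsPrecomplete I M) :
    IsPrecomplete I M' := by
  constructor
  intro f hf
  obtain ⟨L, hL⟩ := h.prec' (fun n => e.symm (f n)) (by
    intro m n hmn
    rw [SModEq.sub_mem, ← map_sub]
    exact aux_map_mem_smul_top (e.symm : M' →ₗ[R] M) (SModEq.sub_mem.mp (hf hmn)))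
  refine ⟨e L, fun n => ?_⟩
  rw [SModEq.sub_mem]
  have : f n - e L = e (e.symm (f n) - L) := by simp
  rw [this]
  exact aux_map_mem_smul_top (e : M →ₗ[R] M') (SModEq.sub_mem.mp (hL n))

lemma aux_isPrecomplete_free [Module.Free R M] [Module.Finite R M] [IsPrecomplete I R] :
    IsPrecomplete I M := by
  classical
  have b := Module.Free.chooseBasis R M
  exact aux_isPrecomplete_of_equiv b.equivFun.symm aux_isPrecomplete_pi

end PrecompleteAux

section HausAux

variable {R : Type*} [CommRing R] {I : Ideal R}
variable {M : Type*} [AddCommGroup M] [Module R M]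
variable {M' : Type*} [AddCommGroup M'] [Module R M']

lemma aux_map_mem_smul_top' (f : M →ₗ[R] M') {J : Ideal R} {x : M}
    (hx : x ∈ (J • ⊤ : Submodule R M)) : f x ∈ (J • ⊤ : Submodule R M') := by
  have h1 : f x ∈ (J • (⊤ : Submodule R M)).map f := Submodule.mem_map_of_mem hx
  rw [Submodule.map_smul''] at h1
  exact Submodule.smul_mono le_rfl le_top h1

lemma aux_isHausdorff_pi {ι : Type*} [IsHausdorff I R] :
    IsHausdorff I (ι → R) := by
  constructor
  intro x hx
  funext i
  have : x i = 0 := by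
    apply IsHausdorff.haus' (I := I) (x i)
    intro n
    rw [SModEq.zero]
    have := SModEq.zero.mp (hx n)
    simpa using aux_map_mem_smul_top' (LinearMap.proj (R := R) (φ := fun _ : ι => R) i) this
  simpa using this

lemma aux_isHausdorff_of_equiv (e : M ≃ₗ[R] M') (h : IsHausdorff I M) :
    IsHausdorff I M' := by
  constructor
  intro x hx
  have : e.symm x = 0 := by
    apply h.haus'
    intro n
    rw [SModEq.zero]
    exact aux_map_mem_smul_top' (e.symm : M' →ₗ[R] M) (SModEq.zero.mp (hx n))
  simpa using congrArg e this

lemma aux_isHausdorff_free [Module.Free R M] [Module.Finite R M] [IsHausdorff I R] :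
    IsHausdorff I M := by
  classical
  have b := Module.Free.chooseBasis R M
  exact aux_isHausdorff_of_equiv b.equivFun.symm aux_isHausdorff_pi

lemma aux_haus [Module.Free R M] [Module.Finite R M] [IsHausdorff I R] {x : M}
    (h : ∀ n : ℕ, x ∈ (I ^ n • ⊤ : Submodule R M)) : x = 0 := by
  apply (aux_isHausdorff_free (I := I) (M := M)).haus'
  intro n
  rw [SModEq.zero]
  exact h n

lemma aux_haus_eq [Module.Free R M] [Module.Finite R M] [IsHausdorff I R] {x y : M}
    (h : ∀ n : ℕ, x - y ∈ (I ^ n • ⊤ : Submodule R M)) : x = y :=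
  sub_eq_zero.mp (aux_haus h)

end HausAux

section NewtonAux

variable {A : Type*} [CommRing A] {I : Ideal A}
variable {Mt : Type*} [AddCommGroup Mt] [Module A Mt]

lemma aux_map_mem_smul_top'' {M' : Type*} [AddCommGroup M'] [Module A M'] (f : Mt →ₗ[A] M')
    {J : Ideal A} {x : Mt} (hx : x ∈ (J • ⊤ : Submodule A Mt)) :
    f x ∈ (J • ⊤ : Submodule A M') := by
  have h1 : f x ∈ (J • (⊤ : Submodule A Mt)).map f := Submodule.mem_map_of_mem hx
  rw [Submodule.map_smul''] at h1
  exact Submodule.smul_mono le_rfl le_top h1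

lemma aux_toN_mul {m n : ℕ} {b c : Module.End A Mt}
    (hb : ∀ x, b x ∈ (I ^ n • ⊤ : Submodule A Mt))
    (hc : ∀ x, c x ∈ (I ^ m • ⊤ : Submodule A Mt)) :
    ∀ x, (b * c) x ∈ (I ^ (n + m) • ⊤ : Submodule A Mt) := by
  intro x
  have h1 : b (c x) ∈ (I ^ m • (⊤ : Submodule A Mt)).map b :=
    Submodule.mem_map_of_mem (hc x)
  rw [Submodule.map_smul''] at h1
  have h2 : (⊤ : Submodule A Mt).map b ≤ I ^ n • ⊤ := by
    rintro y ⟨z, _, rfl⟩; exact hb z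
  have h3 : b (c x) ∈ I ^ m • (I ^ n • ⊤ : Submodule A Mt) :=
    Submodule.smul_mono le_rfl h2 h1
  rw [← Submodule.smul_assoc, smul_eq_mul, ← pow_add, add_comm m n] at h3
  exact h3

lemma aux_toN_mono {m n : ℕ} (hmn : m ≤ n) {x : Mt}
    (h : x ∈ (I ^ n • ⊤ : Submodule A Mt)) : x ∈ (I ^ m • ⊤ : Submodule A Mt) :=
  Submodule.smul_mono (Ideal.pow_le_pow_right hmn) le_rfl h

end NewtonAux

section Newton

variable {A : Type*} [CommRing A] {I : Ideal A} [IsAdicComplete I A]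
variable {Mt : Type*} [AddCommGroup Mt] [Module A Mt] [Module.Free A Mt] [Module.Finite A Mt]

lemma aux_idem_zero {d : Module.End A Mt} (hd : d * d = d)
    (h : ∀ x, d x ∈ (I • ⊤ : Submodule A Mt)) : d = 0 := by
  have h1 : ∀ x, d x ∈ (I ^ 1 • ⊤ : Submodule A Mt) := by
    simpa [pow_one] using h
  have hn : ∀ n : ℕ, ∀ x, d x ∈ (I ^ (n + 1) • ⊤ : Submodule A Mt) := by
    intro n
    induction n with
    | zero => exact h1
    | succ k ih =>
      have := aux_toN_mul h1 ih
      rwa [show d * d = d from hd, show 1 + (k + 1) = k + 1 + 1 by ring] at this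
  ext x
  simp only [LinearMap.zero_apply]
  exact aux_haus (I := I) fun n => aux_toN_mono (Nat.le_succ n) (hn n x)

lemma aux_commute_aeval {Ft c : Module.End A Mt} (h : Commute Ft c) (P : A[X]) :
    Commute (aeval Ft P) c := by
  induction P using Polynomial.induction_on' with
  | add p q hp hq => simpa [map_add] using hp.add_left hq
  | monomial n a =>
    rw [Polynomial.aeval_monomial]
    exact Commute.mul_left (Algebra.commute_algebraMap_left a c) (h.pow_left n)

/-- Newton iteration: lifting an approximate idempotent which is a polynomial in `Ft`
to a genuine idempotent commuting with everything that commutes with `Ft`. -/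
lemma aux_newton_idem (Ft : Module.End A Mt) (Q : A[X])
    (hb : ∀ x, (aeval Ft Q * aeval Ft Q - aeval Ft Q) x ∈ (I • ⊤ : Submodule A Mt)) :
    ∃ e : Module.End A Mt, e * e = e ∧
      (∀ x, (e - aeval Ft Q) x ∈ (I • ⊤ : Submodule A Mt)) ∧
      (∀ c : Module.End A Mt, Commute Ft c → Commute e c) := by
  classical
  -- the Newton sequence of polynomials
  set Nw : ℕ → A[X] := fun n => Nat.rec Q (fun _ p => 3 * p ^ 2 - 2 * p ^ 3) n with hNw
  set c : ℕ → Module.End A Mt := fun n => aeval Ft (Nw n) with hc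
  have hc0 : c 0 = aeval Ft Q := rfl
  have hcsucc : ∀ n, c (n + 1) = aeval Ft (3 * (Nw n) ^ 2 - 2 * (Nw n) ^ 3) := fun n => rfl
  -- defect estimates
  have ht : ∀ n, ∀ x, (c n * c n - c n) x ∈ (I ^ (2 ^ n) • ⊤ : Submodule A Mt) := by
    intro n
    induction n with
    | zero => simpa [pow_one, hc0] using hb
    | succ k ih =>
      have key : c (k + 1) * c (k + 1) - c (k + 1)
          = (c k * c k - c k) * ((c k * c k - c k) *
              aeval Ft (4 * (Nw k * Nw k) - 4 * Nw k - 3)) := by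
        show aeval Ft (3 * Nw k ^ 2 - 2 * Nw k ^ 3) * aeval Ft (3 * Nw k ^ 2 - 2 * Nw k ^ 3)
            - aeval Ft (3 * Nw k ^ 2 - 2 * Nw k ^ 3)
          = (aeval Ft (Nw k) * aeval Ft (Nw k) - aeval Ft (Nw k)) *
            ((aeval Ft (Nw k) * aeval Ft (Nw k) - aeval Ft (Nw k)) *
              aeval Ft (4 * (Nw k * Nw k) - 4 * Nw k - 3))
        simp only [← map_mul, ← map_sub]
        exact congrArg (aeval Ft) (by ring)
      have h2 : ∀ y, ((c k * c k - c k) * aeval Ft (4 * (Nw k * Nw k) - 4 * Nw k - 3)) y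
          ∈ (I ^ (2 ^ k) • ⊤ : Submodule A Mt) := by
        intro y
        rw [Module.End.mul_apply]
        exact ih _
      intro x
      rw [key, pow_succ, mul_two]
      exact aux_toN_mul ih h2 x
  have hstep : ∀ n, ∀ x, (c (n + 1) - c n) x ∈ (I ^ (2 ^ n) • ⊤ : Submodule A Mt) := by
    intro n x
    have key : c (n + 1) - c n
        = (c n * c n - c n) * aeval Ft (1 - 2 * Nw n) := by
      show aeval Ft (3 * Nw n ^ 2 - 2 * Nw n ^ 3) - aeval Ft (Nw n)
        = (aeval Ft (Nw n) * aeval Ft (Nw n) - aeval Ft (Nw n)) * aeval Ft (1 - 2 * Nw n)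
      simp only [← map_mul, ← map_sub]
      exact congrArg (aeval Ft) (by ring)
    rw [key]
    exact ht n _
  have hcauchy : ∀ {m n : ℕ}, m ≤ n → ∀ x, (c n - c m) x ∈ (I ^ m • ⊤ : Submodule A Mt) := by
    intro m n hmn
    induction n, hmn using Nat.le_induction with
    | base => intro x; simp
    | succ k hk ih =>
      intro x
      have h1 : (c (k + 1) - c k) x ∈ (I ^ m • ⊤ : Submodule A Mt) :=
        aux_toN_mono (le_trans hk (Nat.le_of_lt (Nat.lt_two_pow_self (n := k)))) (hstep k x)
      have := Submodule.add_mem _ h1 (ih x)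
      simpa [LinearMap.sub_apply] using this
  -- pass to the limit
  have hprec : IsPrecomplete I Mt := aux_isPrecomplete_free
  have hex : ∀ x : Mt, ∃ Lx : Mt, ∀ n, c n x ≡ Lx [SMOD (I ^ n • ⊤ : Submodule A Mt)] := by
    intro x
    apply hprec.prec'
    intro m n hmn
    rw [SModEq.sub_mem]
    have := hcauchy hmn x
    simpa [LinearMap.sub_apply] using Submodule.neg_mem _ this
  choose L hL using hex
  have happrox : ∀ x n, L x - c n x ∈ (I ^ n • ⊤ : Submodule A Mt) := by
    intro x n
    have := SModEq.sub_mem.mp (hL x n)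
    simpa using Submodule.neg_mem _ this
  have happrox' : ∀ x n, c n x - L x ∈ (I ^ n • ⊤ : Submodule A Mt) := by
    intro x n
    simpa using Submodule.neg_mem _ (happrox x n)
  have hLadd : ∀ x y, L (x + y) = L x + L y := by
    intro x y
    apply aux_haus_eq (I := I)
    intro n
    have heq : L (x + y) - (L x + L y)
        = (L (x + y) - c n (x + y)) - (L x - c n x) - (L y - c n y) := by
      rw [map_add]; abel
    rw [heq]
    exact Submodule.sub_mem _ (Submodule.sub_mem _ (happrox _ n) (happrox x n)) (happrox y n)
  have hLsmul : ∀ (r : A) (x : Mt), L (r • x) = r • L x := by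
    intro r x
    apply aux_haus_eq (I := I)
    intro n
    have heq : L (r • x) - r • L x
        = (L (r • x) - c n (r • x)) + r • (c n x - L x) := by
      rw [map_smul, smul_sub]; abel
    rw [heq]
    exact Submodule.add_mem _ (happrox _ n) (Submodule.smul_mem _ r (happrox' x n))
  set e : Module.End A Mt :=
    { toFun := L
      map_add' := hLadd
      map_smul' := hLsmul } with he
  have heapp : ∀ x, e x = L x := fun _ => rfl
  refine ⟨e, ?_, ?_, ?_⟩
  · -- idempotent
    ext x
    rw [Module.End.mul_apply]
    apply aux_haus_eq (I := I)
    intro n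
    have t1 : e (e x) - c n (e x) ∈ (I ^ n • ⊤ : Submodule A Mt) := happrox _ n
    have t2 : c n (e x) - c n (c n x) ∈ (I ^ n • ⊤ : Submodule A Mt) := by
      rw [← map_sub]
      exact aux_map_mem_smul_top'' (c n) (happrox x n)
    have t3 : c n (c n x) - c n x ∈ (I ^ n • ⊤ : Submodule A Mt) := by
      have := ht n x
      simp only [LinearMap.sub_apply, Module.End.mul_apply] at this
      exact aux_toN_mono (Nat.le_of_lt (Nat.lt_two_pow_self (n := n))) this
    have t4 : c n x - e x ∈ (I ^ n • ⊤ : Submodule A Mt) := happrox' x n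
    have heq : e (e x) - e x
        = (e (e x) - c n (e x)) + (c n (e x) - c n (c n x))
          + (c n (c n x) - c n x) + (c n x - e x) := by abel
    rw [heq]
    exact Submodule.add_mem _ (Submodule.add_mem _ (Submodule.add_mem _ t1 t2) t3) t4
  · -- congruent to the original approximate idempotent
    intro x
    have hpow1 : (I ^ 1 • ⊤ : Submodule A Mt) = I • ⊤ := by rw [pow_one]
    rw [LinearMap.sub_apply, ← hc0, ← hpow1]
    have heq : e x - c 0 x = (e x - c 1 x) + (c 1 x - c 0 x) := by abel
    rw [heq]
    refine Submodule.add_mem _ (happrox x 1) ?_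
    have := hstep 0 x
    simpa [LinearMap.sub_apply] using this
  · -- commutes with everything commuting with Ft
    intro c' hcomm
    have hcc : ∀ n, c n * c' = c' * c n := fun n => (aux_commute_aeval hcomm (Nw n)).eq
    ext x
    rw [Module.End.mul_apply, Module.End.mul_apply]
    apply aux_haus_eq (I := I)
    intro n
    have t2 : c n (c' x) = c' (c n x) := by
      have := congrArg (fun g : Module.End A Mt => g x) (hcc n)
      simpa [Module.End.mul_apply] using this
    have t3 : c' (c n x) - c' (e x) ∈ (I ^ n • ⊤ : Submodule A Mt) := by
      rw [← map_sub]
      exact aux_map_mem_smul_top'' c' (happrox' x n)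
    have heq : e (c' x) - c' (e x)
        = (e (c' x) - c n (c' x)) + (c' (c n x) - c' (e x)) := by
      rw [← t2]; abel
    rw [heq]
    exact Submodule.add_mem _ (happrox _ n) t3

end Newton

/-- Lifting a decomposition into generalized eigenspaces along a complete
Noetherian local ring: if the residual characteristic polynomials on the pieces
are pairwise coprime, a lift `(M̃, F̃)` of `(M, F)` admits a unique decomposition
into `F̃`-stable finite free submodules lifting the given one. -/
theorem lift_decomposition_unique
    (A : Type*) [CommRing A] [IsLocalRing A] [IsNoetherianRing A]
    [IsAdicComplete (maximalIdeal A) A]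
    (Mt : Type*) [AddCommGroup Mt] [Module A Mt]
    [Module.Free A Mt] [Module.Finite A Mt]
    (Ft : Mt →ₗ[A] Mt)
    (Mbar : Type*) [AddCommGroup Mbar] [Module (ResidueField A) Mbar]
    [Module A Mbar] [IsScalarTower A (ResidueField A) Mbar]
    [FiniteDimensional (ResidueField A) Mbar]
    (π : Mt →ₗ[A] Mbar) (hπ : Function.Surjective π)
    (hker : LinearMap.ker π = (maximalIdeal A) • (⊤ : Submodule A Mt))
    (Fbar : Mbar →ₗ[ResidueField A] Mbar)
    (hcomm : ∀ x, Fbar (π x) = π (Ft x))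
    (s : ℕ) (N : Fin s → Submodule (ResidueField A) Mbar)
    (hint : DirectSum.IsInternal N)
    (hstab : ∀ i, ∀ x ∈ N i, Fbar x ∈ N i)
    (hcop : ∀ i j, i ≠ j →
      IsCoprime (LinearMap.charpoly (Fbar.restrict (hstab i)))
        (LinearMap.charpoly (Fbar.restrict (hstab j)))) :
    ∃! Nt : Fin s → Submodule A Mt,
      DirectSum.IsInternal Nt ∧
      (∀ i, ∀ x ∈ Nt i, Ft x ∈ Nt i) ∧
      (∀ i, Module.Free A (Nt i)) ∧
      (∀ i, Submodule.map π (Nt i) = (N i).restrictScalars A) := by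
  classical
  set p : Fin s → (ResidueField A)[X] :=
    fun i => LinearMap.charpoly (Fbar.restrict (hstab i)) with hp
  have hres : ∀ (i : Fin s) (r : (ResidueField A)[X]) (x : Mbar) (hx : x ∈ N i),
      aeval Fbar r x = ((aeval (Fbar.restrict (hstab i)) r) ⟨x, hx⟩ : Mbar) := by
    intro i r
    induction r using Polynomial.induction_on' with
    | add f g hf hg =>
      intro x hx
      rw [map_add, map_add, LinearMap.add_apply, LinearMap.add_apply, hf x hx, hg x hx]
      rfl
    | monomial n a =>
      intro x hx
      rw [Polynomial.aeval_monomial, Polynomial.aeval_monomial]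
      simp only [Module.End.mul_apply, Module.algebraMap_end_apply,
        Module.End.pow_restrict n (hstab i), LinearMap.restrict_apply]
      simp
  have hcayley : ∀ (i : Fin s) (x : Mbar), x ∈ N i → aeval Fbar (p i) x = 0 := by
    intro i x hx
    rw [hres i (p i) x hx, hp]
    rw [LinearMap.aeval_self_charpoly]
    simp
  have hann : ∀ (i : Fin s) (r : (ResidueField A)[X]), p i ∣ r →
      ∀ x ∈ N i, aeval Fbar r x = 0 := by
    rintro i r ⟨w, rfl⟩ x hx
    rw [map_mul, Module.End.mul_apply]
    have hux : aeval Fbar w x ∈ N i := by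
      rw [hres i w x hx]
      exact ((aeval (Fbar.restrict (hstab i)) w) ⟨x, hx⟩).2
    exact hcayley i _ hux
  have hcpr : ∀ i : Fin s, ∃ uu vv : (ResidueField A)[X],
      uu * p i + vv * ∏ j ∈ Finset.univ.erase i, p j = 1 := by
    intro i
    exact IsCoprime.prod_right fun j hj => hcop i j (Finset.ne_of_mem_erase hj).symm
  choose u v huv using hcpr
  set q : Fin s → (ResidueField A)[X] :=
    fun i => v i * ∏ j ∈ Finset.univ.erase i, p j with hq
  have hq1 : ∀ i, p i ∣ (q i - 1) := by
    intro i
    have hh : q i - 1 = -(u i * p i) := by rw [← huv i]; ring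
    rw [hh]
    exact (dvd_mul_left (p i) (u i)).neg_right
  have hq0 : ∀ i j, j ≠ i → p j ∣ q i := by
    intro i j hji
    exact Dvd.dvd.mul_left
      (Finset.dvd_prod_of_mem p (Finset.mem_erase.mpr ⟨hji, Finset.mem_univ j⟩)) (v i)
  set eb : Fin s → Module.End (ResidueField A) Mbar := fun i => aeval Fbar (q i) with heb
  have heid : ∀ (i : Fin s) (x : Mbar), x ∈ N i → eb i x = x := by
    intro i x hx
    have h0 : aeval Fbar (q i - 1) x = 0 := hann i _ (hq1 i) x hx
    rw [map_sub, LinearMap.sub_apply, map_one, Module.End.one_apply] at h0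
    exact sub_eq_zero.mp h0
  have hezero : ∀ (i j : Fin s), j ≠ i → ∀ x ∈ N j, eb i x = 0 :=
    fun i j hji x hx => hann j _ (hq0 i j hji) x hx
  have htopN : ∀ x : Mbar, x ∈ ⨆ j, N j := by
    intro x; rw [hint.submodule_iSup_eq_top]; trivial
  have hemem : ∀ (i : Fin s) (x : Mbar), eb i x ∈ N i := by
    intro i x
    refine Submodule.iSup_induction N (motive := fun y => eb i y ∈ N i) (htopN x) ?_ ?_ ?_
    · intro j y hy
      by_cases hij : j = i
      · subst hij; rw [heid j y hy]; exact hy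
      · rw [hezero i j hij y hy]; exact Submodule.zero_mem _
    · simp
    · intro a b ha hb; rw [map_add]; exact Submodule.add_mem _ ha hb
  have hesum : ∀ x : Mbar, ∑ i, eb i x = x := by
    intro x
    refine Submodule.iSup_induction N (motive := fun y => ∑ i, eb i y = y) (htopN x) ?_ (by simp) ?_
    · intro j y hy
      rw [Finset.sum_eq_single j]
      · exact heid j y hy
      · intro i _ hij; exact hezero i j hij.symm y hy
      · intro h; exact absurd (Finset.mem_univ j) h
    · intro a b ha hb
      simp only [map_add, Finset.sum_add_distrib, ha, hb]
  -- lift the polynomials to A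
  have hsurj : Function.Surjective (algebraMap A (ResidueField A)) := by
    rw [IsLocalRing.ResidueField.algebraMap_eq]; exact residue_surjective
  have hQex : ∀ i, ∃ Qp : A[X], Qp.map (algebraMap A (ResidueField A)) = q i :=
    fun i => Polynomial.map_surjective _ hsurj (q i)
  choose Qp hQp using hQex
  have hpow : ∀ (n : ℕ) (x : Mt), (Fbar ^ n) (π x) = π ((Ft ^ n) x) := by
    intro n
    induction n with
    | zero => intro x; simp
    | succ m ih =>
      intro x
      rw [pow_succ, pow_succ, Module.End.mul_apply, Module.End.mul_apply, hcomm x, ih (Ft x)]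
  have hπaeval : ∀ (P : A[X]) (x : Mt),
      π (aeval Ft P x) = aeval Fbar (P.map (algebraMap A (ResidueField A))) (π x) := by
    intro P
    induction P using Polynomial.induction_on' with
    | add f g hf hg =>
      intro x
      rw [map_add, LinearMap.add_apply, map_add, hf x, hg x, Polynomial.map_add,
        map_add, LinearMap.add_apply]
    | monomial n a =>
      intro x
      rw [Polynomial.map_monomial, Polynomial.aeval_monomial, Polynomial.aeval_monomial]
      simp only [Module.End.mul_apply, Module.algebraMap_end_apply]
      rw [map_smul, algebraMap_smul, hpow n x]
  have hkerm : ∀ z : Mt, π z = 0 → z ∈ ((maximalIdeal A) • ⊤ : Submodule A Mt) := by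
    intro z hz
    rw [← hker]
    exact hz
  have hπeb : ∀ (i : Fin s) (x : Mt), π (aeval Ft (Qp i) x) = eb i (π x) := by
    intro i x
    rw [hπaeval, hQp]
  have happrox : ∀ i : Fin s, ∀ x,
      ((aeval Ft (Qp i)) * (aeval Ft (Qp i)) - aeval Ft (Qp i)) x
        ∈ ((maximalIdeal A) • ⊤ : Submodule A Mt) := by
    intro i x
    apply hkerm
    rw [LinearMap.sub_apply, Module.End.mul_apply, map_sub, hπeb, hπeb,
      heid i _ (hemem i (π x)), sub_self]
  choose E hEidem hEapprox hEcomm using fun i : Fin s =>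
    aux_newton_idem (I := maximalIdeal A) Ft (Qp i) (happrox i)
  have hπE : ∀ (i : Fin s) (x : Mt), π (E i x) = eb i (π x) := by
    intro i x
    have h0 : π ((E i - aeval Ft (Qp i)) x) = 0 := by
      have h1 := hEapprox i x
      rw [← hker] at h1
      exact h1
    rw [LinearMap.sub_apply, map_sub, sub_eq_zero] at h0
    rw [h0, hπeb]
  have hEFt : ∀ i, Commute Ft (E i) := fun i => (hEcomm i Ft (Commute.refl Ft)).symm
  have hEE : ∀ i j, Commute (E i) (E j) := fun i j => (hEcomm j (E i) (hEFt i)).symm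
  have hzero_of : ∀ d : Mt →ₗ[A] Mt, d * d = d → (∀ x, π (d x) = 0) → d = 0 := by
    intro d hidem h
    exact aux_idem_zero (I := maximalIdeal A) hidem (fun x => hkerm _ (h x))
  have horth : ∀ i j, i ≠ j → E i * E j = 0 := by
    intro i j hij
    apply hzero_of
    · calc E i * E j * (E i * E j) = E i * (E j * E i) * E j := by
            rw [mul_assoc, mul_assoc, mul_assoc]
      _ = E i * (E i * E j) * E j := by rw [(hEE j i).eq]
      _ = (E i * E i) * (E j * E j) := by rw [mul_assoc, mul_assoc, mul_assoc]
      _ = E i * E j := by rw [hEidem i, hEidem j]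
    · intro x
      rw [Module.End.mul_apply, hπE, hπE]
      exact hezero i j hij.symm _ (hemem j (π x))
  have hsumE : (∑ i, E i) = 1 := by
    have huid : (∑ i, E i) * (∑ i, E i) = ∑ i, E i := by
      rw [Finset.sum_mul_sum]
      rw [Finset.sum_congr rfl (fun i _ => Finset.sum_eq_single i
        (fun j _ hji => horth i j (Ne.symm hji))
        (fun h => absurd (Finset.mem_univ i) h))]
      exact Finset.sum_congr rfl fun i _ => hEidem i
    have hd : (1 - ∑ i, E i) * (1 - ∑ i, E i) = 1 - ∑ i, E i := by
      rw [mul_sub, sub_mul, sub_mul, one_mul, mul_one, huid]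
      abel
    have h0 : (1 - ∑ i, E i) = 0 := by
      apply hzero_of _ hd
      intro x
      rw [LinearMap.sub_apply, Module.End.one_apply, map_sub, LinearMap.sum_apply,
        map_sum]
      rw [Finset.sum_congr rfl (fun i _ => hπE i x), hesum (π x), sub_self]
    have := sub_eq_zero.mp h0
    exact this.symm
  -- the candidate decomposition
  set Nt : Fin s → Submodule A Mt := fun i => LinearMap.range (E i) with hNt
  have hEfix : ∀ (i : Fin s) (x : Mt), x ∈ Nt i → E i x = x := by
    rintro i x ⟨y, rfl⟩
    have := congrArg (fun g : Mt →ₗ[A] Mt => g y) (hEidem i)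
    simpa [Module.End.mul_apply] using this
  have hEkill : ∀ (i j : Fin s), i ≠ j → ∀ x ∈ Nt j, E i x = 0 := by
    rintro i j hij x ⟨y, rfl⟩
    have := congrArg (fun g : Mt →ₗ[A] Mt => g y) (horth i j hij)
    simpa [Module.End.mul_apply] using this
  have hsumapp : ∀ x : Mt, x = ∑ i, E i x := by
    intro x
    have := congrArg (fun g : Mt →ₗ[A] Mt => g x) hsumE
    simpa [LinearMap.sum_apply] using this.symm
  have hsupNt : (⨆ i, Nt i) = ⊤ := by
    rw [eq_top_iff]
    intro x _
    rw [hsumapp x]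
    exact Submodule.sum_mem _ fun i _ => Submodule.mem_iSup_of_mem i ⟨x, rfl⟩
  have hindep : iSupIndep Nt := by
    intro i
    rw [Submodule.disjoint_def]
    intro x hxi hxrest
    have hkill : E i x = 0 := by
      refine Submodule.iSup_induction _ (motive := fun y => E i y = 0) hxrest ?_ (map_zero _) ?_
      · intro j y hy
        by_cases h : j ≠ i
        · rw [iSup_pos h] at hy
          exact hEkill i j (Ne.symm h) y hy
        · rw [not_not] at h
          subst h
          rw [iSup_neg (by simp)] at hy
          simp only [Submodule.mem_bot] at hy
          rw [hy, map_zero]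
      · intro a b ha hb
        rw [map_add, ha, hb, add_zero]
    rw [← hEfix i x hxi, hkill]
  have hinternal : DirectSum.IsInternal Nt :=
    DirectSum.isInternal_submodule_of_iSupIndep_of_iSup_eq_top hindep hsupNt
  have hstabNt : ∀ i, ∀ x ∈ Nt i, Ft x ∈ Nt i := by
    rintro i x ⟨y, rfl⟩
    refine ⟨Ft y, ?_⟩
    have := congrArg (fun g : Mt →ₗ[A] Mt => g y) (hEFt i).eq
    simpa [Module.End.mul_apply] using this.symm
  haveI hnoeth : IsNoetherian A Mt := isNoetherian_of_isNoetherianRing_of_finite A Mt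
  have hfinNt : ∀ i, Module.Finite A (Nt i) := by
    intro i
    exact Module.Finite.iff_fg.mpr (IsNoetherian.noetherian _)
  have hprojNt : ∀ i, Module.Projective A (Nt i) := by
    intro i
    refine Module.Projective.of_split (Nt i).subtype
      (LinearMap.codRestrict (Nt i) (E i) (fun x => ⟨x, rfl⟩)) ?_
    ext x
    exact hEfix i x.1 x.2
  have hfreeNt : ∀ i, Module.Free A (Nt i) := by
    intro i
    haveI := hfinNt i
    haveI := hprojNt i
    haveI : Module.FinitePresentation A (Nt i) :=
      Module.finitePresentation_of_projective _ _
    exact Module.free_of_flat_of_isLocalRing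
  have hmapNt : ∀ i, Submodule.map π (Nt i) = (N i).restrictScalars A := by
    intro i
    apply le_antisymm
    · rintro _ ⟨x, ⟨y, rfl⟩, rfl⟩
      show π (E i y) ∈ N i
      rw [hπE]
      exact hemem i (π y)
    · intro x hx
      have hxN : x ∈ N i := hx
      obtain ⟨z, rfl⟩ := hπ x
      exact ⟨E i z, ⟨z, rfl⟩, by rw [hπE, heid i _ hxN]⟩
  refine ⟨Nt, ⟨hinternal, hstabNt, hfreeNt, hmapNt⟩, ?_⟩
  rintro Nt' ⟨hint', hstab', hfree', hmap'⟩
  set ε := LinearEquiv.ofBijective (DirectSum.coeLinearMap Nt') hint' with hε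
  set f : Fin s → (Mt →ₗ[A] Mt) := fun i =>
    (Nt' i).subtype ∘ₗ (DirectSum.component A (Fin s) (fun j => ↥(Nt' j)) i) ∘ₗ
      (ε.symm : Mt →ₗ[A] DirectSum (Fin s) (fun j => ↥(Nt' j))) with hf
  have hεlof : ∀ (j : Fin s) (y : Mt) (hy : y ∈ Nt' j),
      ε.symm y = DirectSum.lof A (Fin s) (fun j => ↥(Nt' j)) j ⟨y, hy⟩ := by
    intro j y hy
    rw [LinearEquiv.symm_apply_eq]
    have hrfl : ε ((DirectSum.lof A (Fin s) (fun j => ↥(Nt' j)) j) ⟨y, hy⟩) =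
        (DirectSum.coeLinearMap Nt') ((DirectSum.lof A (Fin s) (fun j => ↥(Nt' j)) j) ⟨y, hy⟩) :=
      rfl
    rw [hrfl, DirectSum.lof_eq_of, DirectSum.coeLinearMap_of]
  have hfap : ∀ (i j : Fin s) (y : Mt) (hy : y ∈ Nt' j),
      f i y = if i = j then y else 0 := by
    intro i j y hy
    show (Nt' i).subtype ((DirectSum.component A (Fin s) (fun j => ↥(Nt' j)) i) (ε.symm y)) = _
    rw [hεlof j y hy, DirectSum.component.of]
    by_cases h : i = j
    · subst h; rw [dif_pos rfl, if_pos rfl]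
      rfl
    · rw [dif_neg (fun hh => h hh.symm), if_neg h, map_zero]
  have hfmem : ∀ (i : Fin s) (x : Mt), f i x ∈ Nt' i := by
    intro i x
    exact ((DirectSum.component A (Fin s) (fun j => ↥(Nt' j)) i) (ε.symm x)).2
  have htop' : ∀ x : Mt, x ∈ ⨆ j, Nt' j := by
    intro x; rw [hint'.submodule_iSup_eq_top]; trivial
  have hfFt : ∀ i, Commute Ft (f i) := by
    intro i
    show Ft * f i = f i * Ft
    ext x
    rw [Module.End.mul_apply, Module.End.mul_apply]
    refine Submodule.iSup_induction _ (motive := fun y => Ft (f i y) = f i (Ft y)) (htop' x) ?_ ?_ ?_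
    · intro j y hy
      rw [hfap i j y hy, hfap i j (Ft y) (hstab' j y hy)]
      by_cases h : i = j
      · rw [if_pos h, if_pos h]
      · rw [if_neg h, if_neg h, map_zero]
    · simp
    · intro a b ha hb
      simp [map_add, ha, hb]
  have hπf : ∀ (i : Fin s) (x : Mt), π (f i x) = eb i (π x) := by
    intro i x
    refine Submodule.iSup_induction _ (motive := fun y => π (f i y) = eb i (π y)) (htop' x) ?_ ?_ ?_
    · intro j y hy
      have hπy : π y ∈ N j := by
        have hmem : π y ∈ Submodule.map π (Nt' j) := Submodule.mem_map_of_mem hy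
        rw [hmap' j] at hmem
        exact hmem
      rw [hfap i j y hy]
      by_cases h : i = j
      · subst h; rw [if_pos rfl, heid i (π y) hπy]
      · rw [if_neg h, map_zero, hezero i j (fun hh => h hh.symm) (π y) hπy]
    · simp
    · intro a b ha hb
      simp [map_add, ha, hb]
  have hfE : ∀ i, f i = E i := by
    intro i
    set uu := f i with huu
    set vv := E i with hvv
    have hu : uu * uu = uu := by
      ext x
      rw [Module.End.mul_apply]
      rw [hfap i i (uu x) (hfmem i x), if_pos rfl]
    have hv : vv * vv = vv := hEidem i
    have hc : vv * uu = uu * vv := (hEcomm i (f i) (hfFt i)).eq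
    have h1 : uu * (uu * vv) = uu * vv := by rw [← mul_assoc, hu]
    have h2 : (uu * vv) * uu = uu * vv := by
      rw [mul_assoc, hc, ← mul_assoc, hu]
    have h3 : (uu * vv) * (uu * vv) = uu * vv := by
      rw [mul_assoc uu vv (uu * vv), ← mul_assoc vv uu vv, hc, mul_assoc uu vv vv, hv, h1]
    have h4 : vv * (uu * vv) = uu * vv := by rw [← mul_assoc, hc, mul_assoc, hv]
    have h5 : (uu * vv) * vv = uu * vv := by rw [mul_assoc, hv]
    -- first idempotent difference
    have hd1 : uu - uu * vv = 0 := by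
      apply hzero_of
      · calc (uu - uu * vv) * (uu - uu * vv)
            = uu * uu - uu * (uu * vv) - ((uu * vv) * uu - (uu * vv) * (uu * vv)) := by
              rw [sub_mul, mul_sub, mul_sub]
        _ = uu - uu * vv := by rw [hu, h1, h2, h3]; abel
      · intro x
        rw [LinearMap.sub_apply, Module.End.mul_apply, map_sub, hπf, hπf, hπE,
          heid i _ (hemem i (π x)), sub_self]
    have hd2 : vv - uu * vv = 0 := by
      apply hzero_of
      · calc (vv - uu * vv) * (vv - uu * vv)
            = vv * vv - vv * (uu * vv) - ((uu * vv) * vv - (uu * vv) * (uu * vv)) := by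
              rw [sub_mul, mul_sub, mul_sub]
        _ = vv - uu * vv := by rw [hv, h4, h5, h3]; abel
      · intro x
        rw [LinearMap.sub_apply, Module.End.mul_apply, map_sub, hπE, hπf, hπE,
          heid i _ (hemem i (π x)), sub_self]
    have := sub_eq_zero.mp hd1
    rw [this]
    exact (sub_eq_zero.mp hd2).symm
  funext i
  apply le_antisymm
  · intro x hx
    refine ⟨x, ?_⟩
    have : f i x = x := by rw [hfap i i x hx, if_pos rfl]
    rw [← hfE i]
    exact this
  · rintro x ⟨y, rfl⟩
    rw [← hfE i]
    exact hfmem i y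
end

section
/- Let A be a complete Noetherian local ring with residue field k of characteristic l, and let ρ: T_q → GL(M) be a continuous representation of the q-tame group T_q = ⟨t, φ⟩ (with φ t φ⁻¹ = t^q) on a finite free A-module M, whose reduction mod m_A is unramified (i.e., kills t). Suppose M = M₀ ⊕ M₁ is a φ-stable decomposition with pairwise coprime residual characteristic polynomials, and suppose q is not an eigenvalue of the conjugation action of φ on Hom_k(M̄_i, M̄_j) for i ≠ j. Then the off-diagonal blocks ρ(t)_{i,j} ∈ Hom_A(M_i, M_j) for i ≠ j vanish, i.e., the decomposition is stable under all of T_q. -/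
open IsLocalRing

section helpers
variable {R : Type*} [CommRing R] {M N : Type*} [AddCommGroup M] [AddCommGroup N]
  [Module R M] [Module R N]

theorem mem_smul_top_map (f : M →ₗ[R] N) (I : Ideal R) {x : M}
    (hx : x ∈ I • (⊤ : Submodule R M)) : f x ∈ I • (⊤ : Submodule R N) := by
  have h1 : f x ∈ Submodule.map f (I • (⊤ : Submodule R M)) := Submodule.mem_map_of_mem hx
  rw [Submodule.map_smul''] at h1
  exact Submodule.smul_mono le_rfl le_top h1

theorem apply_mem_smul_top {u : M →ₗ[R] N} {I : Ideal R}
    (hu : u ∈ I • (⊤ : Submodule R (M →ₗ[R] N))) (x : M) :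
    u x ∈ I • (⊤ : Submodule R N) := by
  refine Submodule.smul_induction_on hu (fun r hr f _ => ?_) (fun f g hf hg => ?_)
  · rw [LinearMap.smul_apply]
    exact Submodule.smul_mem_smul hr trivial
  · rw [LinearMap.add_apply]
    exact Submodule.add_mem _ hf hg

theorem apply_mem_smul_top₂ {u : M →ₗ[R] N} {I J : Ideal R}
    (hu : u ∈ I • (⊤ : Submodule R (M →ₗ[R] N))) {x : M}
    (hx : x ∈ J • (⊤ : Submodule R M)) :
    u x ∈ (I * J) • (⊤ : Submodule R N) := by
  rw [← Ideal.smul_eq_mul, Submodule.smul_assoc]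
  refine Submodule.smul_induction_on hu (fun r hr f _ => ?_) (fun f g hf hg => ?_)
  · rw [LinearMap.smul_apply]
    exact Submodule.smul_mem_smul hr (mem_smul_top_map f J hx)
  · rw [LinearMap.add_apply]
    exact Submodule.add_mem _ hf hg

theorem mem_smul_top_of_forall [Module.Free R M] [Module.Finite R M]
    (u : M →ₗ[R] N) (I : Ideal R)
    (h : ∀ x, u x ∈ I • (⊤ : Submodule R N)) :
    u ∈ I • (⊤ : Submodule R (M →ₗ[R] N)) := by
  classical
  set b := Module.Free.chooseBasis R M with hb
  let Fm : ∀ _s : Module.Free.ChooseBasisIndex R M, N →ₗ[R] (M →ₗ[R] N) := fun s =>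
    { toFun := fun y => LinearMap.smulRight (b.coord s) y
      map_add' := by intro y z; ext w; simp
      map_smul' := by
        intro c y; ext w
        simp only [LinearMap.smulRight_apply, LinearMap.smul_apply, RingHom.id_apply]
        rw [smul_comm] }
  have hu : u = ∑ s, Fm s (u (b s)) := by
    apply b.ext
    intro t
    simp only [LinearMap.coe_sum, Finset.sum_apply, Fm, LinearMap.coe_mk, AddHom.coe_mk,
      LinearMap.smulRight_apply, Module.Basis.coord_apply, Module.Basis.repr_self]
    rw [Finset.sum_eq_single t]
    · simp
    · intro s _ hs
      simp [Finsupp.single_apply, Ne.symm hs]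
    · intro ht; exact absurd (Finset.mem_univ t) ht
  rw [hu]
  exact Submodule.sum_mem _ fun s _ => mem_smul_top_map (Fm s) I (h (b s))

theorem mem_smul_top_subtype {P Q : Submodule R M} (hdis : P ⊓ Q = ⊥) (hsup : P ⊔ Q = ⊤)
    (I : Ideal R) (x : P) (hx : (x : M) ∈ I • (⊤ : Submodule R M)) :
    x ∈ I • (⊤ : Submodule R P) := by
  have h1 : I • (⊤ : Submodule R M) = I • P ⊔ I • Q := by rw [← hsup, Submodule.smul_sup]
  rw [h1] at hx
  obtain ⟨a, ha, b, hb, hab⟩ := Submodule.mem_sup.mp hx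
  have haP : a ∈ P := Submodule.smul_le_right ha
  have hbQ : b ∈ Q := Submodule.smul_le_right hb
  have hbP : b ∈ P := by
    have hba : b = (x : M) - a := by rw [← hab]; abel
    rw [hba]; exact sub_mem x.2 haP
  have hb0 : b = 0 := by
    have : b ∈ P ⊓ Q := Submodule.mem_inf.mpr ⟨hbP, hbQ⟩
    rw [hdis] at this; simpa using this
  have hxa : (x : M) ∈ I • P := by rw [← hab, hb0, add_zero]; exact ha
  have h2 : I • P = Submodule.map P.subtype (I • (⊤ : Submodule R P)) := by
    rw [Submodule.map_smul'', Submodule.map_top, Submodule.range_subtype]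
  rw [h2] at hxa
  obtain ⟨y, hy, hyx⟩ := hxa
  have : y = x := Subtype.ext hyx
  rwa [← this]

theorem mem_smul_top_map_range (f : M →ₗ[R] N) (I J : Ideal R)
    (hr : ∀ z, f z ∈ J • (⊤ : Submodule R N)) {x : M}
    (hx : x ∈ I • (⊤ : Submodule R M)) :
    f x ∈ (I * J) • (⊤ : Submodule R N) := by
  rw [← Ideal.smul_eq_mul, Submodule.smul_assoc]
  refine Submodule.smul_induction_on hx (fun r hrm w _ => ?_) (fun w v hw hv => ?_)
  · rw [map_smul]
    exact Submodule.smul_mem_smul hrm (hr w)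
  · rw [map_add]
    exact Submodule.add_mem _ hw hv

end helpers

section residue
variable {A : Type*} [CommRing A] [IsLocalRing A]

/-- Upgrade an `A`-linear map between `ResidueField A`-modules to a
`ResidueField A`-linear map. -/
noncomputable def residueLinear {V W : Type*} [AddCommGroup V] [AddCommGroup W]
    [Module (ResidueField A) V] [Module A V] [IsScalarTower A (ResidueField A) V]
    [Module (ResidueField A) W] [Module A W] [IsScalarTower A (ResidueField A) W]
    (f : V →ₗ[A] W) : V →ₗ[ResidueField A] W where
  toFun := f
  map_add' := f.map_add
  map_smul' := by
    intro c x
    obtain ⟨a, rfl⟩ := IsLocalRing.residue_surjective c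
    rw [RingHom.id_apply, ← IsLocalRing.ResidueField.algebraMap_eq, algebraMap_smul,
      algebraMap_smul]
    exact f.map_smul a x

@[simp] lemma residueLinear_apply {V W : Type*} [AddCommGroup V] [AddCommGroup W]
    [Module (ResidueField A) V] [Module A V] [IsScalarTower A (ResidueField A) V]
    [Module (ResidueField A) W] [Module A W] [IsScalarTower A (ResidueField A) W]
    (f : V →ₗ[A] W) (x : V) : residueLinear f x = f x := rfl

end residue

-- instance sanity checks
noncomputable example (A : Type*) [CommRing A] [IsLocalRing A] (Mbar : Type*) [AddCommGroup Mbar]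
    [Module (ResidueField A) Mbar] [Module A Mbar] [IsScalarTower A (ResidueField A) Mbar]
    (p : Submodule (ResidueField A) Mbar) : Module A p := inferInstance

example (A : Type*) [CommRing A] [IsLocalRing A] (Mbar : Type*) [AddCommGroup Mbar]
    [Module (ResidueField A) Mbar] [Module A Mbar] [IsScalarTower A (ResidueField A) Mbar]
    (p : Submodule (ResidueField A) Mbar) : IsScalarTower A (ResidueField A) p := inferInstance

set_option maxHeartbeats 1000000 in
theorem tame_aux
    (A : Type*) [CommRing A] [IsLocalRing A] [IsNoetherianRing A]
    (Mt : Type*) [AddCommGroup Mt] [Module A Mt]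
    [Module.Free A Mt] [Module.Finite A Mt]
    (q : ℕ) (ρt ρφ : Mt ≃ₗ[A] Mt)
    (hrel : ∀ z, ρφ (ρt z) = (ρt.toLinearMap ^ q) (ρφ z))
    (Mbar : Type*) [AddCommGroup Mbar] [Module (ResidueField A) Mbar]
    [Module A Mbar] [IsScalarTower A (ResidueField A) Mbar]
    [FiniteDimensional (ResidueField A) Mbar]
    (π : Mt →ₗ[A] Mbar)
    (hker : LinearMap.ker π = (maximalIdeal A) • (⊤ : Submodule A Mt))
    (hunram : ∀ x, π (ρt x) = π x)
    (φbar : Mbar →ₗ[ResidueField A] Mbar)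
    (hφcomm : ∀ x, φbar (π x) = π (ρφ x))
    (P Q : Submodule A Mt) (hPQ : IsCompl P Q)
    (hφP : ∀ x ∈ P, ρφ x ∈ P) (hφQ : ∀ x ∈ Q, ρφ x ∈ Q)
    (Ni Nj : Submodule (ResidueField A) Mbar)
    (hredP : Submodule.map π P = Ni.restrictScalars A)
    (hredQ : Submodule.map π Q = Nj.restrictScalars A)
    (hNi : ∀ x ∈ Ni, φbar x ∈ Ni) (hNj : ∀ x ∈ Nj, φbar x ∈ Nj)
    (heig : ∀ f : Ni →ₗ[ResidueField A] Nj,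
      (φbar.restrict hNj) ∘ₗ f = (q : ResidueField A) • (f ∘ₗ (φbar.restrict hNi)) → f = 0) :
    ∀ x ∈ P, ρt x ∈ P := by
  classical
  -- instances
  haveI : Module.Finite A P := Module.Finite.iff_fg.mpr (IsNoetherian.noetherian P)
  haveI : Module.Finite A Q := Module.Finite.iff_fg.mpr (IsNoetherian.noetherian Q)
  haveI : Module.Projective A P := Module.Projective.of_split P.subtype
      (P.linearProjOfIsCompl Q hPQ)
      (LinearMap.ext fun x => Submodule.linearProjOfIsCompl_apply_left hPQ x)
  haveI : Module.Projective A Q := Module.Projective.of_split Q.subtype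
      (Q.linearProjOfIsCompl P hPQ.symm)
      (LinearMap.ext fun x => Submodule.linearProjOfIsCompl_apply_left hPQ.symm x)
  haveI : Module.FinitePresentation A P := Module.finitePresentation_of_projective A P
  haveI : Module.FinitePresentation A Q := Module.finitePresentation_of_projective A Q
  haveI : Module.Free A P := Module.free_of_flat_of_isLocalRing
  haveI : Module.Free A Q := Module.free_of_flat_of_isLocalRing
  -- abbreviations
  set m : Ideal A := maximalIdeal A with hmdef
  set projP : Mt →ₗ[A] P := P.linearProjOfIsCompl Q hPQ with hprojP
  set projQ : Mt →ₗ[A] Q := Q.linearProjOfIsCompl P hPQ.symm with hprojQ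
  set T : Mt →ₗ[A] Mt := ρt.toLinearMap with hT
  set n : Mt →ₗ[A] Mt := ρt.toLinearMap - LinearMap.id with hn
  set u : P →ₗ[A] Q := projQ ∘ₗ (ρt.toLinearMap ∘ₗ P.subtype) with hu
  have hdis : P ⊓ Q = ⊥ := hPQ.inf_eq_bot
  have hsup : P ⊔ Q = ⊤ := hPQ.sup_eq_top
  -- n has range in m • ⊤
  have hnz : ∀ z, n z ∈ m • (⊤ : Submodule A Mt) := by
    intro z
    have : π (n z) = 0 := by
      simp only [hn, LinearMap.sub_apply, LinearMap.id_apply, map_sub,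
        LinearEquiv.coe_coe, hunram z, sub_self]
    have hz : n z ∈ LinearMap.ker π := LinearMap.mem_ker.mpr this
    rwa [hker] at hz
  -- restricted maps
  set φPl : P →ₗ[A] P := ρφ.toLinearMap.restrict hφP with hφPldef
  set φQl : Q →ₗ[A] Q := ρφ.toLinearMap.restrict hφQ with hφQldef
  -- reduction maps
  have hmemNi : ∀ x : P, π ↑x ∈ Ni := by
    intro x
    have h1 : π ↑x ∈ Submodule.map π P := ⟨↑x, x.2, rfl⟩
    rw [hredP] at h1
    exact h1
  have hmemNj : ∀ z : Q, π ↑z ∈ Nj := by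
    intro z
    have h1 : π ↑z ∈ Submodule.map π Q := ⟨↑z, z.2, rfl⟩
    rw [hredQ] at h1
    exact h1
  set νP : P →ₗ[A] Ni :=
    { toFun := fun x => ⟨π ↑x, hmemNi x⟩
      map_add' := fun x y => Subtype.ext (by simp)
      map_smul' := fun a x => Subtype.ext (by simp) } with hνPdef
  set νQ : Q →ₗ[A] Nj :=
    { toFun := fun z => ⟨π ↑z, hmemNj z⟩
      map_add' := fun x y => Subtype.ext (by simp)
      map_smul' := fun a x => Subtype.ext (by simp) } with hνQdef
  have hνPsurj : Function.Surjective νP := by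
    intro w
    have h1 : (w : Mbar) ∈ Submodule.map π P := by rw [hredP]; exact w.2
    obtain ⟨x, hxP, hx⟩ := h1
    exact ⟨⟨x, hxP⟩, Subtype.ext hx⟩
  have hνQsurj : Function.Surjective νQ := by
    intro w
    have h1 : (w : Mbar) ∈ Submodule.map π Q := by rw [hredQ]; exact w.2
    obtain ⟨x, hxQ, hx⟩ := h1
    exact ⟨⟨x, hxQ⟩, Subtype.ext hx⟩
  have hνPker : ∀ x : P, νP x = 0 ↔ x ∈ m • (⊤ : Submodule A P) := by
    intro x
    constructor
    · intro h
      have h1 : π ↑x = 0 := congrArg Subtype.val h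
      have h2 : (↑x : Mt) ∈ LinearMap.ker π := LinearMap.mem_ker.mpr h1
      rw [hker] at h2
      exact mem_smul_top_subtype hdis hsup m x h2
    · intro h
      have h2 : (↑x : Mt) ∈ m • (⊤ : Submodule A Mt) := mem_smul_top_map P.subtype m h
      rw [← hker] at h2
      exact Subtype.ext (LinearMap.mem_ker.mp h2)
  have hνQker : ∀ z : Q, νQ z = 0 ↔ z ∈ m • (⊤ : Submodule A Q) := by
    intro z
    constructor
    · intro h
      have h1 : π ↑z = 0 := congrArg Subtype.val h
      have h2 : (↑z : Mt) ∈ LinearMap.ker π := LinearMap.mem_ker.mpr h1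
      rw [hker] at h2
      exact mem_smul_top_subtype (by rw [inf_comm]; exact hdis) (by rw [sup_comm]; exact hsup) m z h2
    · intro h
      have h2 : (↑z : Mt) ∈ m • (⊤ : Submodule A Mt) := mem_smul_top_map Q.subtype m h
      rw [← hker] at h2
      exact Subtype.ext (LinearMap.mem_ker.mp h2)
  -- intertwining relations
  have hinti : ∀ x : P, νP (φPl x) = (φbar.restrict hNi) (νP x) := by
    intro x
    refine Subtype.ext ?_
    show π (ρφ ↑x) = φbar (π ↑x)
    exact (hφcomm ↑x).symm
  have hintj : ∀ z : Q, νQ (φQl z) = (φbar.restrict hNj) (νQ z) := by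
    intro z
    refine Subtype.ext ?_
    show π (ρφ ↑z) = φbar (π ↑z)
    exact (hφcomm ↑z).symm
  -- the conjugation-minus-q operator
  set L : (P →ₗ[A] Q) →ₗ[A] (P →ₗ[A] Q) :=
    { toFun := fun g => φQl ∘ₗ g - (q : A) • (g ∘ₗ φPl)
      map_add' := by
        intro g₁ g₂
        ext x
        simp only [LinearMap.comp_add, LinearMap.add_comp, LinearMap.add_apply,
          LinearMap.sub_apply, LinearMap.smul_apply, LinearMap.comp_apply, smul_add]
        abel
      map_smul' := by
        intro a g
        ext x
        simp only [LinearMap.comp_apply, LinearMap.sub_apply, LinearMap.smul_apply,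
          RingHom.id_apply, map_smul, smul_sub]
        rw [smul_comm a] } with hLdef
  have hLapp : ∀ (g : P →ₗ[A] Q) (x : P), L g x = φQl (g x) - (q : A) • g (φPl x) := by
    intro g x; rfl
  -- surjectivity of L via Nakayama and the residual eigenvalue condition
  have hrangeL : ∀ h : P →ₗ[A] Q, ∃ g, ∀ x : P,
      (h - L g) x ∈ m • (⊤ : Submodule A Q) := by
    intro h
    set c : P →ₗ[A] Nj := νQ ∘ₗ h with hcdef
    have hle : LinearMap.ker νP ≤ LinearMap.ker c := by
      intro x hx
      have hx1 : νP x = 0 := LinearMap.mem_ker.mp hx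
      have hx2 : x ∈ m • (⊤ : Submodule A P) := (hνPker x).mp hx1
      have hx3 : h x ∈ m • (⊤ : Submodule A Q) := mem_smul_top_map h m hx2
      exact LinearMap.mem_ker.mpr ((hνQker (h x)).mpr hx3)
    set e := νP.quotKerEquivOfSurjective hνPsurj with hedef
    set d0 : Ni →ₗ[A] Nj :=
      (Submodule.liftQ (LinearMap.ker νP) c hle) ∘ₗ e.symm.toLinearMap with hd0def
    have hd0 : ∀ x : P, d0 (νP x) = c x := by
      intro x
      have he : e (Submodule.Quotient.mk x) = νP x := by
        simp [hedef, LinearMap.quotKerEquivOfSurjective]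
      have he' : e.symm (νP x) = Submodule.Quotient.mk x := by
        rw [← he, LinearEquiv.symm_apply_apply]
      simp only [hd0def, LinearMap.comp_apply, LinearEquiv.coe_coe, he',
        Submodule.liftQ_apply]
    set d : Ni →ₗ[ResidueField A] Nj := residueLinear d0 with hddef
    set Φ : (Ni →ₗ[ResidueField A] Nj) →ₗ[ResidueField A] (Ni →ₗ[ResidueField A] Nj) :=
      { toFun := fun f => (φbar.restrict hNj) ∘ₗ f -
          (q : ResidueField A) • (f ∘ₗ (φbar.restrict hNi))
        map_add' := by
          intro f₁ f₂
          ext w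
          simp only [LinearMap.comp_add, LinearMap.add_comp, LinearMap.add_apply,
            LinearMap.sub_apply, LinearMap.smul_apply, LinearMap.comp_apply, smul_add]
          abel
        map_smul' := by
          intro a f
          ext w
          simp only [LinearMap.comp_apply, LinearMap.sub_apply, LinearMap.smul_apply,
            RingHom.id_apply, map_smul, smul_sub]
          rw [smul_comm a] } with hΦdef
    have hΦinj : Function.Injective Φ := by
      intro f₁ f₂ hf
      have h1 : Φ (f₁ - f₂) = 0 := by rw [map_sub, hf, sub_self]
      have h2 : (φbar.restrict hNj) ∘ₗ (f₁ - f₂) =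
          (q : ResidueField A) • ((f₁ - f₂) ∘ₗ (φbar.restrict hNi)) := by
        have h3 := sub_eq_zero.mp h1
        exact h3
      have := heig (f₁ - f₂) h2
      exact sub_eq_zero.mp this
    have hΦsurj : Function.Surjective Φ := LinearMap.surjective_of_injective hΦinj
    obtain ⟨f, hf⟩ := hΦsurj d
    -- lift f to an A-linear map P → Q
    set bP := Module.Free.chooseBasis A P with hbPdef
    have hchoice : ∀ s, ∃ z : Q, νQ z = f (νP (bP s)) := fun s => hνQsurj _
    choose yy hyy using hchoice
    set g : P →ₗ[A] Q := bP.constr A yy with hgdef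
    have hg : ∀ x : P, νQ (g x) = f (νP x) := by
      have hcomp : νQ ∘ₗ g = (f.restrictScalars A) ∘ₗ νP := by
        apply bP.ext
        intro s
        simp only [LinearMap.comp_apply, hgdef, Module.Basis.constr_basis, hyy s,
          LinearMap.coe_restrictScalars]
      intro x
      exact LinearMap.ext_iff.mp hcomp x
    refine ⟨g, fun x => ?_⟩
    have hval : νQ ((h - L g) x) = 0 := by
      have h1 : νQ (h x) = d (νP x) := by
        rw [hddef, residueLinear_apply, hd0 x]; rfl
      have h2 : νQ (L g x) = d (νP x) := by
        have h3 : νQ (L g x) = Φ f (νP x) := by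
          rw [hLapp g x, map_sub, hintj (g x), hg x, map_smul, hg (φPl x), hinti x]
          have h4 : (q : A) • f ((φbar.restrict hNi) (νP x)) =
              (q : ResidueField A) • f ((φbar.restrict hNi) (νP x)) := by
            rw [Nat.cast_smul_eq_nsmul, Nat.cast_smul_eq_nsmul]
          rw [h4]
          rfl
        rw [h3, hf]
      rw [LinearMap.sub_apply, map_sub, h1, h2, sub_self]
    exact (hνQker _).mp hval
  have hLsurj : Function.Surjective L := by
    have hsup2 : LinearMap.range L ⊔ m • (⊤ : Submodule A (P →ₗ[A] Q)) = ⊤ := by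
      rw [eq_top_iff]
      rintro h -
      obtain ⟨g, hg⟩ := hrangeL h
      have h1 : h - L g ∈ m • (⊤ : Submodule A (P →ₗ[A] Q)) :=
        mem_smul_top_of_forall _ m hg
      have h2 : h = L g + (h - L g) := by abel
      rw [h2]
      exact Submodule.add_mem _ (Submodule.mem_sup_left ⟨g, rfl⟩)
        (Submodule.mem_sup_right h1)
    set K := LinearMap.range L with hKdef
    have htop : (⊤ : Submodule A ((P →ₗ[A] Q) ⧸ K)) = ⊥ := by
      apply Submodule.eq_bot_of_le_smul_of_le_jacobson_bot m
      · exact Module.finite_def.mp inferInstance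
      · rintro z -
        obtain ⟨h, rfl⟩ := K.mkQ_surjective z
        have h1 : h ∈ K ⊔ m • (⊤ : Submodule A (P →ₗ[A] Q)) := by
          rw [hsup2]; trivial
        obtain ⟨a, ha, b, hb, hab⟩ := Submodule.mem_sup.mp h1
        have h2 : K.mkQ h = K.mkQ b := by
          rw [← hab, map_add]
          have : K.mkQ a = 0 := (Submodule.Quotient.mk_eq_zero K).mpr ha
          rw [Submodule.mkQ_apply] at this ⊢
          rw [this, zero_add]
        rw [h2]
        exact Submodule.smul_mono le_rfl le_top (mem_smul_top_map K.mkQ m hb)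
      · rw [IsLocalRing.jacobson_eq_maximalIdeal (⊥ : Ideal A) bot_ne_top]
    have hK : K = ⊤ := by
      rw [eq_top_iff]
      rintro h -
      have h1 : K.mkQ h ∈ (⊤ : Submodule A ((P →ₗ[A] Q) ⧸ K)) := trivial
      rw [htop] at h1
      have h2 : K.mkQ h = 0 := h1
      exact (Submodule.Quotient.mk_eq_zero K).mp h2
    exact LinearMap.range_eq_top.mp hK
  haveI : IsNoetherian A (P →ₗ[A] Q) := isNoetherian_of_isNoetherianRing_of_finite A _
  have hLinj : Function.Injective L :=
    IsNoetherian.injective_of_surjective_endomorphism L hLsurj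
  -- pointwise facts
  have huapp : ∀ x : P, u x = projQ (ρt ↑x) := fun _ => rfl
  have hnapp : ∀ z, n z = ρt z - z := fun z => rfl
  have hprojQP : ∀ w ∈ P, projQ w = 0 := fun w hw =>
    Submodule.projectionOnto_apply_of_mem_right hPQ.symm hw
  have hprojQQ : ∀ z : Q, projQ ↑z = z := fun z =>
    Submodule.linearProjOfIsCompl_apply_left hPQ.symm z
  -- base case
  have hbase : u ∈ (m ^ 1) • (⊤ : Submodule A (P →ₗ[A] Q)) := by
    rw [pow_one]
    apply mem_smul_top_of_forall
    intro x
    have h1 : u x = projQ (n ↑x) := by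
      rw [hnapp, map_sub, hprojQP ↑x x.2, sub_zero, huapp]
    rw [h1]
    exact mem_smul_top_map projQ m (hnz ↑x)
  -- inductive step
  have hstep : ∀ K : ℕ, 1 ≤ K →
      u ∈ (m ^ K) • (⊤ : Submodule A (P →ₗ[A] Q)) →
      u ∈ (m ^ (K + 1)) • (⊤ : Submodule A (P →ₗ[A] Q)) := by
    intro K hK1 hKmem
    have keyn : ∀ z : Mt, z ∈ m • (⊤ : Submodule A Mt) →
        projQ z ∈ (m ^ K) • (⊤ : Submodule A Q) →
        projQ (n z) ∈ (m ^ (K + 1)) • (⊤ : Submodule A Q) := by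
      intro z hz hzQ
      have hdecomp : (↑(projP z) : Mt) + ↑(projQ z) = z :=
        Submodule.projection_add_projection_eq_self hPQ z
      have h1 : n z = n ↑(projP z) + n ↑(projQ z) := by rw [← map_add, hdecomp]
      have hfirst : projQ (n ↑(projP z)) = u (projP z) := by
        rw [hnapp, map_sub, hprojQP ↑(projP z) (projP z).2, sub_zero, huapp]
      have hP1 : projP z ∈ m • (⊤ : Submodule A P) := mem_smul_top_map projP m hz
      have hfirstmem : u (projP z) ∈ (m ^ (K + 1)) • (⊤ : Submodule A Q) := by
        have h2 := apply_mem_smul_top₂ hKmem hP1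
        rwa [← pow_succ] at h2
      have hsecondmem : projQ (n ↑(projQ z)) ∈ (m ^ (K + 1)) • (⊤ : Submodule A Q) := by
        have h3 : (↑(projQ z) : Mt) ∈ (m ^ K) • (⊤ : Submodule A Mt) :=
          mem_smul_top_map Q.subtype (m ^ K) hzQ
        have h4 : n ↑(projQ z) ∈ (m ^ K * m) • (⊤ : Submodule A Mt) :=
          mem_smul_top_map_range n (m ^ K) m hnz h3
        rw [← pow_succ] at h4
        exact mem_smul_top_map projQ _ h4
      rw [h1, map_add, hfirst]
      exact Submodule.add_mem _ hfirstmem hsecondmem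
    have hTstab : ∀ z : Mt, z ∈ m • (⊤ : Submodule A Mt) →
        projQ z ∈ (m ^ (K + 1)) • (⊤ : Submodule A Q) →
        (T z ∈ m • (⊤ : Submodule A Mt) ∧
          projQ (T z) ∈ (m ^ (K + 1)) • (⊤ : Submodule A Q)) := by
      intro z hz hzQ
      have hTz : T z = z + n z := by
        rw [hnapp]
        show ρt z = z + (ρt z - z)
        abel
      constructor
      · rw [hTz]; exact Submodule.add_mem _ hz (hnz z)
      · rw [hTz, map_add]
        have hzQ' : projQ z ∈ (m ^ K) • (⊤ : Submodule A Q) :=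
          Submodule.smul_mono_left (Ideal.pow_le_pow_right (by omega)) hzQ
        exact Submodule.add_mem _ hzQ (keyn z hz hzQ')
    have hpowstab : ∀ (r : ℕ) (z : Mt), z ∈ m • (⊤ : Submodule A Mt) →
        projQ z ∈ (m ^ (K + 1)) • (⊤ : Submodule A Q) →
        ((T ^ r) z ∈ m • (⊤ : Submodule A Mt) ∧
          projQ ((T ^ r) z) ∈ (m ^ (K + 1)) • (⊤ : Submodule A Q)) := by
      intro r
      induction r with
      | zero =>
        intro z hz hzQ
        rw [pow_zero]
        simpa using And.intro hz hzQ
      | succ r ih =>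
        intro z hz hzQ
        have h1 : (T ^ (r + 1)) z = (T ^ r) (T z) := by
          rw [pow_succ]; rfl
        obtain ⟨ha, hb⟩ := hTstab z hz hzQ
        rw [h1]
        exact ih (T z) ha hb
    have hLu : ∀ x : P, L u x ∈ (m ^ (K + 1)) • (⊤ : Submodule A Q) := by
      intro x
      set y : Mt := ρφ ↑x with hy
      have hyP : y ∈ P := hφP ↑x x.2
      have hw0 : projQ (n y) = u (φPl x) := by
        rw [hnapp, map_sub, hprojQP y hyP, sub_zero, huapp]
        rfl
      have hny : n y ∈ m • (⊤ : Submodule A Mt) := hnz y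
      have hnyQ : projQ (n y) ∈ (m ^ K) • (⊤ : Submodule A Q) := by
        rw [hw0]; exact apply_mem_smul_top hKmem (φPl x)
      have hnny : n (n y) ∈ m • (⊤ : Submodule A Mt) := hnz (n y)
      have hnnyQ : projQ (n (n y)) ∈ (m ^ (K + 1)) • (⊤ : Submodule A Q) :=
        keyn (n y) hny hnyQ
      have hgeomQ : ∀ r : ℕ,
          projQ ((T ^ r) (n y) - n y) ∈ (m ^ (K + 1)) • (⊤ : Submodule A Q) := by
        intro r
        have hTn : T - 1 = n := by
          rw [hT, hn, Module.End.one_eq_id]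
        have hgeom : (T ^ r) (n y) - n y = (∑ s ∈ Finset.range r, T ^ s) (n (n y)) := by
          have h1 : (∑ s ∈ Finset.range r, T ^ s) * (T - 1) = T ^ r - 1 := geom_sum_mul T r
          calc (T ^ r) (n y) - n y = (T ^ r - 1) (n y) := by
                simp [LinearMap.sub_apply]
            _ = ((∑ s ∈ Finset.range r, T ^ s) * (T - 1)) (n y) := by rw [h1]
            _ = (∑ s ∈ Finset.range r, T ^ s) ((T - 1) (n y)) := rfl
            _ = (∑ s ∈ Finset.range r, T ^ s) (n (n y)) := by rw [hTn]
        rw [hgeom, LinearMap.sum_apply, map_sum]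
        exact Submodule.sum_mem _ fun s _ => (hpowstab s (n (n y)) hnny hnnyQ).2
      have hD : ∀ r : ℕ, projQ ((T ^ r) y) - r • u (φPl x) ∈
          (m ^ (K + 1)) • (⊤ : Submodule A Q) := by
        intro r
        induction r with
        | zero =>
          simp only [pow_zero, Module.End.one_apply, zero_nsmul, sub_zero]
          rw [hprojQP y hyP]
          exact Submodule.zero_mem _
        | succ r ih =>
          have h1 : (T ^ (r + 1)) y = (T ^ r) y + (T ^ r) (n y) := by
            have h3 : T = 1 + n := by
              rw [hT, hn, Module.End.one_eq_id]; abel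
            have h2 : T ^ (r + 1) = T ^ r + T ^ r * n := by
              rw [pow_succ]
              nth_rewrite 2 [h3]
              rw [mul_add, mul_one]
            rw [h2]
            rfl
          rw [h1, map_add, succ_nsmul]
          have h5 : projQ ((T ^ r) y) + projQ ((T ^ r) (n y)) -
              (r • u (φPl x) + u (φPl x)) =
              (projQ ((T ^ r) y) - r • u (φPl x)) + projQ ((T ^ r) (n y) - n y) := by
            rw [map_sub, hw0]; abel
          rw [h5]
          exact Submodule.add_mem _ ih (hgeomQ r)
      have h6 : φQl (u x) = projQ ((T ^ q) y) := by
        have h7 : ρφ (ρt ↑x) = (T ^ q) y := hrel ↑x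
        have hdec : (↑(projP (ρt ↑x)) : Mt) + ↑(projQ (ρt ↑x)) = ρt ↑x :=
          Submodule.projection_add_projection_eq_self hPQ (ρt ↑x)
        have h8 : projQ (ρφ (ρt ↑x)) = φQl (u x) := by
          conv_lhs => rw [← hdec]
          rw [map_add, map_add]
          rw [hprojQP (ρφ ↑(projP (ρt ↑x))) (hφP _ (projP (ρt ↑x)).2), zero_add]
          have h9 : ρφ (↑(projQ (ρt ↑x)) : Mt) = ↑(φQl (u x)) := rfl
          rw [h9, hprojQQ]
        rw [← h8, h7]
      have h10 : L u x = projQ ((T ^ q) y) - (q : A) • u (φPl x) := by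
        rw [hLapp u x, h6]
      rw [h10, Nat.cast_smul_eq_nsmul]
      exact hD q
    have hLumem : L u ∈ (m ^ (K + 1)) • (⊤ : Submodule A (P →ₗ[A] Q)) :=
      mem_smul_top_of_forall _ _ hLu
    set eL := LinearEquiv.ofBijective L ⟨hLinj, hLsurj⟩ with heLdef
    have h10 : u = eL.symm (L u) := by
      have h11 : eL u = L u := rfl
      rw [← h11, LinearEquiv.symm_apply_apply]
    rw [h10]
    exact mem_smul_top_map eL.symm.toLinearMap _ hLumem
  -- conclude u = 0 by Krull intersection
  have hall : ∀ K : ℕ, u ∈ (m ^ K) • (⊤ : Submodule A (P →ₗ[A] Q)) := by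
    intro K
    induction K with
    | zero =>
      rw [pow_zero, Ideal.one_eq_top, Submodule.top_smul]
      trivial
    | succ K ih =>
      rcases Nat.eq_zero_or_pos K with h | h
      · subst h; exact hbase
      · exact hstep K h ih
  have hu0 : u = 0 := by
    set bH := Module.Free.chooseBasis A (P →ₗ[A] Q) with hbH
    set eidx := Fintype.equivFin (Module.Free.ChooseBasisIndex A (P →ₗ[A] Q)) with heidx
    set bH' := bH.reindex eidx with hbH'
    set eH := bH'.equivFun with heH
    have hmem : ∀ K : ℕ, eH u ∈
        (m ^ K) • (⊤ : Submodule A (Fin (Fintype.card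
          (Module.Free.ChooseBasisIndex A (P →ₗ[A] Q))) → A)) :=
      fun K => mem_smul_top_map eH.toLinearMap _ (hall K)
    have hKrull := Ideal.iInf_pow_smul_eq_bot_of_isLocalRing (R := A)
      (M := Fin (Fintype.card (Module.Free.ChooseBasisIndex A (P →ₗ[A] Q))) → A)
      (I := m) (Ideal.IsMaximal.ne_top inferInstance)
    have h0 : eH u = 0 := by
      have h1 : eH u ∈ (⊥ : Submodule A _) := by
        rw [← hKrull]
        exact Submodule.mem_iInf _ |>.mpr hmem
      simpa using h1
    exact eH.map_eq_zero_iff.mp h0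
  -- conclusion
  intro x hx
  have h1 : projQ (ρt x) = 0 := by
    have h2 : u ⟨x, hx⟩ = 0 := by rw [hu0]; rfl
    rw [huapp] at h2
    exact h2
  have h2 : (↑(projP (ρt x)) : Mt) + ↑(projQ (ρt x)) = ρt x :=
    Submodule.projection_add_projection_eq_self hPQ (ρt x)
  rw [h1] at h2
  simp only [Submodule.coe_zero, add_zero] at h2
  rw [← h2]
  exact (projP (ρt x)).2

/-- Stability of a lifted decomposition under the whole tame group: for a lift
`ρ` of an unramified representation of the `q`-tame group `T_q = ⟨t, φ⟩`
(with `φ t φ⁻¹ = t^q`) on a finite free module over a complete Noetherian local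
ring, if `M = M₀ ⊕ M₁` is `φ`-stable with pairwise coprime residual
characteristic polynomials and `q` is not an eigenvalue of conjugation by `φ̄`
on the off-diagonal residual Hom spaces, then `M₀` and `M₁` are stable under
`t`, i.e. under all of `T_q`. -/
theorem tame_decomposition_stable
    (A : Type*) [CommRing A] [IsLocalRing A] [IsNoetherianRing A]
    [IsAdicComplete (maximalIdeal A) A]
    (Mt : Type*) [AddCommGroup Mt] [Module A Mt]
    [Module.Free A Mt] [Module.Finite A Mt]
    (q : ℕ)
    (ρt ρφ : Mt ≃ₗ[A] Mt)
    (hrel : ρφ * ρt * ρφ⁻¹ = ρt ^ q)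
    (Mbar : Type*) [AddCommGroup Mbar] [Module (ResidueField A) Mbar]
    [Module A Mbar] [IsScalarTower A (ResidueField A) Mbar]
    [FiniteDimensional (ResidueField A) Mbar]
    (π : Mt →ₗ[A] Mbar) (hπ : Function.Surjective π)
    (hker : LinearMap.ker π = (maximalIdeal A) • (⊤ : Submodule A Mt))
    -- the reduction of `ρ` is unramified: `t` acts trivially mod `m_A`
    (hunram : ∀ x, π (ρt x) = π x)
    (φbar : Mbar →ₗ[ResidueField A] Mbar) (hφbij : Function.Bijective φbar)
    (hφcomm : ∀ x, φbar (π x) = π (ρφ x))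
    -- the `φ`-stable decomposition `M = M₀ ⊕ M₁` and its reduction
    (Msub : Fin 2 → Submodule A Mt)
    (hint : DirectSum.IsInternal Msub)
    (hφstab : ∀ i, ∀ x ∈ Msub i, ρφ x ∈ Msub i)
    (N : Fin 2 → Submodule (ResidueField A) Mbar)
    (hred : ∀ i, Submodule.map π (Msub i) = (N i).restrictScalars A)
    (hNstab : ∀ i, ∀ x ∈ N i, φbar x ∈ N i)
    -- the residual characteristic polynomials are pairwise coprime
    (hcop : ∀ i j, i ≠ j →
      IsCoprime (LinearMap.charpoly (φbar.restrict (hNstab i)))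
        (LinearMap.charpoly (φbar.restrict (hNstab j))))
    -- `q` is not an eigenvalue of conjugation by `φ̄` on `Hom_k(M̄_i, M̄_j)`
    (heig : ∀ i j, i ≠ j → ∀ f : (N i) →ₗ[ResidueField A] (N j),
      (φbar.restrict (hNstab j)) ∘ₗ f =
        (q : ResidueField A) • (f ∘ₗ (φbar.restrict (hNstab i))) → f = 0) :
    ∀ i, ∀ x ∈ Msub i, ρt x ∈ Msub i := by
  have hrel' : ∀ z, ρφ (ρt z) = (ρt.toLinearMap ^ q) (ρφ z) := by
    intro z
    have h1 : ρφ * ρt = ρt ^ q * ρφ := by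
      have h0 : ρφ * ρt * ρφ⁻¹ * ρφ = ρt ^ q * ρφ := by rw [hrel]
      rwa [inv_mul_cancel_right] at h0
    have h2 : (ρφ * ρt) z = (ρt ^ q * ρφ) z := by rw [h1]
    have h3 : ∀ w, (ρt ^ q) w = (ρt.toLinearMap ^ q) w := by
      intro w
      rw [LinearEquiv.pow_apply, Module.End.pow_apply]
      rfl
    calc ρφ (ρt z) = (ρφ * ρt) z := rfl
      _ = (ρt ^ q * ρφ) z := h2
      _ = (ρt ^ q) (ρφ z) := rfl
      _ = (ρt.toLinearMap ^ q) (ρφ z) := h3 (ρφ z)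
  have huniv : (Set.univ : Set (Fin 2)) = {0, 1} := by
    ext x; fin_cases x <;> simp
  have hcompl : IsCompl (Msub 0) (Msub 1) :=
    (DirectSum.isInternal_submodule_iff_isCompl Msub (by decide) huniv).mp hint
  intro i
  fin_cases i
  · exact tame_aux A Mt q ρt ρφ hrel' Mbar π hker hunram φbar hφcomm
      (Msub 0) (Msub 1) hcompl (hφstab 0) (hφstab 1) (N 0) (N 1)
      (hred 0) (hred 1) (hNstab 0) (hNstab 1) (heig 0 1 (by decide))
  · exact tame_aux A Mt q ρt ρφ hrel' Mbar π hker hunram φbar hφcomm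
      (Msub 1) (Msub 0) hcompl.symm (hφstab 1) (hφstab 0) (N 1) (N 0)
      (hred 1) (hred 0) (hNstab 1) (hNstab 0) (heig 1 0 (by decide))
end
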